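/- Let H be a bipartite graph with parts {u_1,…,u_m} and {v_1,…,v_m}, with degrees sorted so that deg(u_1) ≤ … ≤ deg(u_m) and deg(v_1) ≤ … ≤ deg(v_m). Let i be the smallest index with deg(u_i) ≤ i + 1 and j the smallest index with deg(v_j) ≤ j + 1 (when such indices exist). If deg(u_i) + deg(v_j) ≥ m + 2, then H is Hamiltonian bi-connected: for every pair of vertices a in the first part and b in the second part, H has a Hamiltonian path with endpoints a and b. -/

import Mathlib

open List Finset

namespace Stmt7
variable {α β γ : Type*} {G : SimpleGraph α}

/-! ### walks from lists -/

def walkOfChain : ∀ (x : α) (l : List α), List.Chain G.Adj x l → G.Walk x ((x :: l).getLast (by simp))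
  | _, [], _ => SimpleGraph.Walk.nil
  | x, y :: l, h => by
      rw [List.Chain, List.chain_cons] at h
      exact (SimpleGraph.Walk.cons h.1 (walkOfChain y l (show List.Chain G.Adj y l from h.2))).copy rfl
        (List.getLast_cons (by simp : (y :: l) ≠ [])).symm

theorem walkOfChain_support (x : α) (l : List α) (h : List.Chain G.Adj x l) :
    (walkOfChain x l h).support = x :: l := by
  induction l generalizing x with
  | nil => rfl
  | cons y l ih =>
      simp only [walkOfChain, SimpleGraph.Walk.support_copy, SimpleGraph.Walk.support_cons]
      rw [ih]

theorem walk_of_list {a b : α} (l : List α) (hc : l.Chain' G.Adj) (hn : l.Nodup)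
    (hh : l.head? = some a) (hl : l.getLast? = some b) :
    ∃ p : G.Walk a b, p.IsPath ∧ p.length = l.length - 1 := by
  match l, hh with
  | x :: t, hh =>
    have hx : a = x := by simpa using hh.symm
    subst hx
    have hc2 : List.Chain G.Adj a t := hc
    have hb : (a :: t).getLast (by simp) = b := by
      rw [List.getLast?_eq_getLast (l := a :: t) (by simp)] at hl
      exact Option.some.inj hl
    refine ⟨(walkOfChain a t hc2).copy rfl hb, ?_, ?_⟩
    · rw [SimpleGraph.Walk.isPath_def, SimpleGraph.Walk.support_copy, walkOfChain_support]
      exact hn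
    · have := walkOfChain_support a t hc2
      have h2 := SimpleGraph.Walk.length_support ((walkOfChain a t hc2).copy rfl hb)
      rw [SimpleGraph.Walk.support_copy, this] at h2
      rw [SimpleGraph.Walk.length_copy] at h2
      rw [SimpleGraph.Walk.length_copy]
      simp only [List.length_cons] at h2 ⊢
      omega

/-! ### interleaving -/

def inter : List β → List γ → List (β ⊕ γ)
  | [], _ => []
  | _ :: _, [] => []
  | a :: as, b :: bs => Sum.inl a :: Sum.inr b :: inter as bs

theorem inter_perm : ∀ (as : List β) (bs : List γ), as.length = bs.length →
    (inter as bs).Perm (as.map Sum.inl ++ bs.map Sum.inr)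
  | [], [], _ => by simp [inter]
  | a :: as, b :: bs, h => by
    simp only [inter, List.map_cons, List.cons_append]
    refine List.Perm.cons _ ?_
    refine ((inter_perm as bs (by simpa using h)).cons _).trans ?_
    exact (List.perm_middle).symm

theorem inter_length : ∀ (as : List β) (bs : List γ), as.length = bs.length →
    (inter as bs).length = 2 * as.length
  | [], [], _ => by simp [inter]
  | a :: as, b :: bs, h => by
    simp only [inter, List.length_cons, inter_length as bs (by simpa using h)]
    omega

theorem inter_head : ∀ (as : List β) (bs : List γ), as.length = bs.length →
    (inter as bs).head? = as.head?.map Sum.inl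
  | [], [], _ => by simp [inter]
  | a :: as, b :: bs, _ => by simp [inter]

theorem inter_getLast : ∀ (as : List β) (bs : List γ), as.length = bs.length →
    (inter as bs).getLast? = bs.getLast?.map Sum.inr
  | [], [], _ => by simp [inter]
  | [a], [b], _ => by simp [inter]
  | a :: a' :: as, b :: b' :: bs, h => by
    have ih := inter_getLast (a' :: as) (b' :: bs) (by simpa using h)
    show (Sum.inl a :: Sum.inr b :: inter (a' :: as) (b' :: bs)).getLast? = _
    rw [List.getLast?_cons_cons]
    rw [show inter (a' :: as) (b' :: bs) = Sum.inl a' :: Sum.inr b' :: inter as bs from rfl]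
    rw [List.getLast?_cons_cons,
      show (Sum.inl a' :: Sum.inr b' :: inter as bs) = inter (a' :: as) (b' :: bs) from rfl, ih,
      List.getLast?_cons_cons]
  | [a], b :: b' :: bs, h => by simp at h
  | a :: a' :: as, [b], h => by simp at h

theorem inter_chain' {R : β ⊕ γ → β ⊕ γ → Prop}
    (hR : ∀ x y, R (Sum.inl x) (Sum.inr y)) (hR' : ∀ x y, R (Sum.inr y) (Sum.inl x)) :
    ∀ (as : List β) (bs : List γ), as.length = bs.length → List.Chain' R (inter as bs)
  | [], [], _ => by simp [inter, List.Chain']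
  | a :: as, b :: bs, h => by
    have ih := inter_chain' hR hR' as bs (by simpa using h)
    refine List.IsChain.cons_cons (hR a b) ?_
    refine List.isChain_cons.2 ⟨?_, ih⟩
    intro z hz
    match as, bs, hz with
    | a' :: as', b' :: bs', hz =>
      simp [inter] at hz
      subst hz; exact hR' a' b

/-! ### basic defs -/

variable {m : ℕ}

def Cross (H : SimpleGraph (Fin m ⊕ Fin m)) : Prop :=
  ∀ a b : Fin m ⊕ Fin m, H.Adj a b → (a.isLeft ∧ b.isRight) ∨ (a.isRight ∧ b.isLeft)

def HamList (H : SimpleGraph (Fin m ⊕ Fin m)) (a b : Fin m) : Prop :=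
  ∃ l : List (Fin m ⊕ Fin m), l.Chain' H.Adj ∧ l.Nodup ∧ l.length = 2 * m ∧
    l.head? = some (Sum.inl a) ∧ l.getLast? = some (Sum.inr b)

open Classical in
noncomputable def ndeg (H : SimpleGraph (Fin m ⊕ Fin m)) (v : Fin m ⊕ Fin m) : ℕ :=
  (Finset.univ.filter (H.Adj v ·)).card

theorem ndeg_eq_degree (H : SimpleGraph (Fin m ⊕ Fin m)) [DecidableRel H.Adj] (v) :
    ndeg H v = H.degree v := by
  classical
  rw [← SimpleGraph.card_neighborFinset_eq_degree, SimpleGraph.neighborFinset_eq_filter, ndeg]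
  congr 1
  exact Finset.filter_congr_decidable _ _ _

theorem ndeg_mono {H H' : SimpleGraph (Fin m ⊕ Fin m)} (h : H ≤ H') (v) :
    ndeg H v ≤ ndeg H' v := by
  classical
  apply Finset.card_le_card
  intro w hw
  simp only [ndeg, Finset.mem_filter, Finset.mem_univ, true_and] at hw ⊢
  exact h hw

/-- every graph `≤` complete-cross graph stays cross... -/
theorem hamList_complete (H : SimpleGraph (Fin m ⊕ Fin m)) (hm : 1 ≤ m)
    (hall : ∀ x y : Fin m, H.Adj (Sum.inl x) (Sum.inr y)) (a b : Fin m) : HamList H a b := by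
  classical
  set La : List (Fin m) := a :: (Finset.univ.erase a).toList with hLa
  set Lb : List (Fin m) := (Finset.univ.erase b).toList ++ [b] with hLb
  have hLalen : La.length = m := by
    simp [hLa, Finset.card_erase_of_mem]
    omega
  have hLblen : Lb.length = m := by
    simp [hLb, Finset.card_erase_of_mem]
    omega
  have hlen : La.length = Lb.length := by rw [hLalen, hLblen]
  have hLanodup : La.Nodup := by
    refine List.nodup_cons.2 ⟨?_, Finset.nodup_toList _⟩
    simp
  have hLbnodup : Lb.Nodup := by
    rw [hLb]
    refine List.Nodup.append (Finset.nodup_toList _) (List.nodup_singleton b) ?_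
    intro x hx hx'
    simp at hx hx'
    exact hx hx'
  refine ⟨inter La Lb, ?_, ?_, ?_, ?_, ?_⟩
  · exact inter_chain' (fun x y => hall x y) (fun x y => (hall x y).symm) La Lb hlen
  · rw [(inter_perm La Lb hlen).nodup_iff]
    refine List.Nodup.append (hLanodup.map Sum.inl_injective) (hLbnodup.map Sum.inr_injective) ?_
    intro z hz hz'
    simp only [List.mem_map] at hz hz'
    obtain ⟨u, -, rfl⟩ := hz
    obtain ⟨v, -, hv⟩ := hz'
    exact Sum.inl_ne_inr hv.symm
  · rw [inter_length La Lb hlen, hLalen]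
  · rw [inter_head La Lb hlen, hLa]
    rfl
  · rw [inter_getLast La Lb hlen, hLb, List.getLast?_append]
    rfl

open Classical in
theorem ndeg_left (H : SimpleGraph (Fin m ⊕ Fin m)) (hc : Cross H) (x : Fin m) :
    ndeg H (Sum.inl x) = (Finset.univ.filter fun v : Fin m => H.Adj (Sum.inl x) (Sum.inr v)).card := by
  rw [ndeg, show (Finset.univ.filter (H.Adj (Sum.inl x) ·)) =
      (Finset.univ.filter fun v : Fin m => H.Adj (Sum.inl x) (Sum.inr v)).image Sum.inr from ?_]
  · exact Finset.card_image_of_injective _ Sum.inr_injective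
  · ext w
    cases w with
    | inl u =>
        simp only [Finset.mem_filter, Finset.mem_univ, true_and, Finset.mem_image]
        constructor
        · intro h; rcases hc _ _ h with ⟨h1, h2⟩ | ⟨h1, h2⟩ <;> simp at h1 h2
        · rintro ⟨v, -, hv⟩; exact absurd hv (by simp)
    | inr v =>
        simp only [Finset.mem_filter, Finset.mem_univ, true_and, Finset.mem_image]
        constructor
        · intro h; exact ⟨v, h, rfl⟩
        · rintro ⟨v', hv', he⟩; rwa [← Sum.inr_injective he]

open Classical in
theorem ndeg_right (H : SimpleGraph (Fin m ⊕ Fin m)) (hc : Cross H) (y : Fin m) :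
    ndeg H (Sum.inr y) = (Finset.univ.filter fun u : Fin m => H.Adj (Sum.inr y) (Sum.inl u)).card := by
  rw [ndeg, show (Finset.univ.filter (H.Adj (Sum.inr y) ·)) =
      (Finset.univ.filter fun u : Fin m => H.Adj (Sum.inr y) (Sum.inl u)).image Sum.inl from ?_]
  · exact Finset.card_image_of_injective _ Sum.inl_injective
  · ext w
    cases w with
    | inr u =>
        simp only [Finset.mem_filter, Finset.mem_univ, true_and, Finset.mem_image]
        constructor
        · intro h; rcases hc _ _ h with ⟨h1, h2⟩ | ⟨h1, h2⟩ <;> simp at h1 h2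
        · rintro ⟨v, -, hv⟩; exact absurd hv (by simp)
    | inl v =>
        simp only [Finset.mem_filter, Finset.mem_univ, true_and, Finset.mem_image]
        constructor
        · intro h; exact ⟨v, h, rfl⟩
        · rintro ⟨v', hv', he⟩; rwa [← Sum.inl_injective he]

theorem card_val_lt (q : ℕ) : (Finset.univ.filter fun j : Fin m => j.val < q).card ≤ q := by
  classical
  calc (Finset.univ.filter fun j : Fin m => j.val < q).card
      ≤ (Finset.range q).card := by
        apply Finset.card_le_card_of_injOn (fun j => j.val)
        · intro j hj
          rw [Finset.mem_coe, Finset.mem_filter] at hj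
          simpa using hj.2
        · intro j _ j' _ h
          exact Fin.val_injective h
    _ = q := Finset.card_range q

theorem find_c (d : Fin m → ℕ) (hmono : Monotone d) (hm : 1 ≤ m) (t : ℕ) (ht : t ≤ m + 1)
    (y : Fin m) (hy : d y ≤ t)
    (hcard : t - 1 ≤ (Finset.univ.filter fun j : Fin m => d j ≤ t).card) :
    ∃ c : Fin m, d c ≤ t ∧ d c ≤ c.val + 2 := by
  classical
  by_cases ht2 : 2 ≤ t
  · set c : Fin m := ⟨t - 2, by omega⟩ with hc
    have hdc : d c ≤ t := by
      by_contra h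
      have hsub : (Finset.univ.filter fun j : Fin m => d j ≤ t) ⊆
          (Finset.univ.filter fun j : Fin m => j.val < t - 2) := by
        intro j hj
        simp only [Finset.mem_filter, Finset.mem_univ, true_and] at hj ⊢
        by_contra hlt
        push_neg at hlt
        have : c ≤ j := by
          rw [Fin.le_def]
          simpa [hc] using hlt
        exact h (le_trans (hmono this) hj)
      have := le_trans hcard (le_trans (Finset.card_le_card hsub) (card_val_lt (t - 2)))
      omega
    exact ⟨c, hdc, by rw [show c.val = t - 2 from rfl]; omega⟩
  · exact ⟨y, hy, by omega⟩

theorem find_min (d : Fin m → ℕ) (hmono : Monotone d) (t : ℕ)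
    (c : Fin m) (hc1 : d c ≤ t) (hc2 : d c ≤ c.val + 2) :
    ∃ j₀ : Fin m, d j₀ ≤ j₀.val + 2 ∧ (∀ j' : Fin m, j' < j₀ → ¬ d j' ≤ j'.val + 2) ∧ d j₀ ≤ t := by
  classical
  set T := Finset.univ.filter fun j : Fin m => d j ≤ j.val + 2 with hT
  have hTne : T.Nonempty := ⟨c, by simp [hT, hc2]⟩
  refine ⟨T.min' hTne, ?_, ?_, ?_⟩
  · have := T.min'_mem hTne
    simpa [hT] using this
  · intro j' hj' hle
    have : T.min' hTne ≤ j' := T.min'_le j' (by simp [hT, hle])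
    exact absurd hj' (not_lt.2 this)
  · exact le_trans (hmono (T.min'_le c (by simp [hT, hc2]))) hc1

theorem cross_sup (H : SimpleGraph (Fin m ⊕ Fin m)) (hc : Cross H) (x y : Fin m) :
    Cross (H ⊔ SimpleGraph.fromEdgeSet {s(Sum.inl x, Sum.inr y)}) := by
  intro u v huv
  rcases huv with h | h
  · exact hc u v h
  · rw [SimpleGraph.fromEdgeSet_adj] at h
    simp only [Set.mem_singleton_iff, Sym2.eq, Sym2.rel_iff', Prod.mk.injEq, Prod.swap_prod_mk] at h
    rcases h.1 with ⟨rfl, rfl⟩ | ⟨rfl, rfl⟩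
    · exact Or.inl ⟨rfl, rfl⟩
    · exact Or.inr ⟨rfl, rfl⟩


theorem getElem_idx_congr {α : Type*} {l : List α} {i j : ℕ} (h : i = j) (hi : i < l.length) :
    l[i]'hi = l[j]'(h ▸ hi) := by subst h; rfl

theorem rotate_list {α : Type*} {R : α → α → Prop} (hsym : Symmetric R) (l : List α) (s t : ℕ)
    (hs : 1 ≤ s) (hst : s < t) (ht : t < l.length)
    (hadj : ∀ i, i + 1 < l.length → i ≠ s - 1 → i ≠ t - 1 →
      ∀ (hi2 : i + 1 < l.length), R (l[i]'(by omega)) (l[i+1]'hi2))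
    (h1 : R (l[s-1]'(by omega)) (l[t-1]'(by omega)))
    (h2 : R (l[s]'(by omega)) (l[t]'ht)) :
    ∃ l' : List α, l'.Chain' R ∧ l'.Perm l ∧ l'.head? = l.head? ∧ l'.getLast? = l.getLast? := by
  set A := l.take s with hA
  set B := (l.drop s).take (t - s) with hB
  set C := l.drop t with hC
  have hlA : A.length = s := by rw [hA, List.length_take]; omega
  have hlB : B.length = t - s := by rw [hB, List.length_take, List.length_drop]; omega
  have hlC : C.length = l.length - t := by rw [hC, List.length_drop]
  have hgetA : ∀ (i : ℕ) (h : i < A.length), A[i]'h = l[i]'(by omega) := by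
    intro i h
    have := List.getElem?_take (l := l) (i := s) (j := i)
    rw [if_pos (by omega)] at this
    rw [← hA] at this
    rw [List.getElem?_eq_getElem h, List.getElem?_eq_getElem (by omega : i < l.length)] at this
    exact Option.some.inj this
  have hgetB : ∀ (j : ℕ) (h : j < B.length), B[j]'h = l[s+j]'(by omega) := by
    intro j h
    have h1' := List.getElem?_take (l := l.drop s) (i := t - s) (j := j)
    rw [if_pos (by omega), List.getElem?_drop, ← hB] at h1'
    rw [List.getElem?_eq_getElem h, List.getElem?_eq_getElem (by omega : s + j < l.length)] at h1'
    exact Option.some.inj h1'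
  have hgetC : ∀ (j : ℕ) (h : j < C.length), C[j]'h = l[t+j]'(by omega) := by
    intro j h
    have h1' := List.getElem?_drop (xs := l) (i := t) (j := j)
    rw [← hC, List.getElem?_eq_getElem h, List.getElem?_eq_getElem (by omega : t + j < l.length)] at h1'
    exact Option.some.inj h1'
  have hAne : A ≠ [] := by rw [← List.length_pos_iff]; omega
  have hBne : B ≠ [] := by rw [← List.length_pos_iff]; omega
  have hCne : C ≠ [] := by rw [← List.length_pos_iff]; omega
  -- chains
  have hchA : A.Chain' R := by
    unfold List.Chain'
    rw [List.isChain_iff_getElem]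
    intro i hi
    rw [hgetA i (by omega), hgetA (i+1) (by omega)]
    exact hadj i (by omega) (by omega) (by omega) (by omega)
  have hchB : B.Chain' R := by
    unfold List.Chain'
    rw [List.isChain_iff_getElem]
    intro j hj
    rw [hgetB j (by omega), hgetB (j+1) (by omega)]
    exact hadj (s+j) (by omega) (by omega) (by omega) (by omega)
  have hchC : C.Chain' R := by
    unfold List.Chain'
    rw [List.isChain_iff_getElem]
    intro j hj
    rw [hgetC j (by omega), hgetC (j+1) (by omega)]
    exact hadj (t+j) (by omega) (by omega) (by omega) (by omega)
  have hchBrev : B.reverse.Chain' R := by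
    unfold List.Chain'
    rw [List.isChain_reverse]
    exact List.IsChain.imp (fun a b h => hsym h) hchB
  -- boundary values (at getElem? level to avoid motive issues)
  have hAlast : A.getLast? = l[s-1]? := by
    rw [List.getLast?_eq_getElem?, hlA, hA, List.getElem?_take, if_pos (by omega)]
  have hAhead : A.head? = l[0]? := by
    rw [List.head?_eq_getElem?, hA, List.getElem?_take, if_pos (by omega)]
  have hBlast : B.getLast? = l[t-1]? := by
    rw [List.getLast?_eq_getElem?, hlB, hB, List.getElem?_take, if_pos (by omega),
      List.getElem?_drop]
    exact congrArg (fun k => l[k]?) (by omega)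
  have hBhead : B.head? = l[s]? := by
    rw [List.head?_eq_getElem?, hB, List.getElem?_take, if_pos (by omega), List.getElem?_drop]
    exact congrArg (fun k => l[k]?) (by omega)
  have hChead : C.head? = l[t]? := by
    rw [List.head?_eq_getElem?, hC, List.getElem?_drop]
    exact congrArg (fun k => l[k]?) (by omega)
  have hClast : C.getLast? = l[l.length - 1]? := by
    rw [List.getLast?_eq_getElem?, hlC, hC, List.getElem?_drop]
    exact congrArg (fun k => l[k]?) (by omega)
  have hdec : A ++ (B ++ C) = l := by
    have hCC : C = (l.drop s).drop (t - s) := by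
      rw [hC, List.drop_drop]
      congr 1
      omega
    rw [hCC, hB, List.take_append_drop, hA, List.take_append_drop]
  refine ⟨A ++ (B.reverse ++ C), ?_, ?_, ?_, ?_⟩
  · unfold List.Chain'
    rw [List.isChain_append]
    refine ⟨hchA, ?_, ?_⟩
    · rw [List.isChain_append]
      refine ⟨hchBrev, hchC, ?_⟩
      intro u hu v hv
      rw [List.getLast?_reverse, hBhead,
        List.getElem?_eq_getElem (by omega : s < l.length)] at hu
      rw [hChead, List.getElem?_eq_getElem ht] at hv
      have hu' : l[s]'(by omega) = u := Option.some.inj (Option.mem_def.1 hu)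
      have hv' : l[t]'ht = v := Option.some.inj (Option.mem_def.1 hv)
      rw [← hu', ← hv']
      exact h2
    · intro u hu v hv
      rw [hAlast, List.getElem?_eq_getElem (by omega : s - 1 < l.length)] at hu
      rw [List.head?_append, List.head?_reverse, hBlast,
        List.getElem?_eq_getElem (by omega : t - 1 < l.length)] at hv
      have hu' : l[s-1]'(by omega) = u := Option.some.inj (Option.mem_def.1 hu)
      have hv' : l[t-1]'(by omega) = v := Option.some.inj (Option.mem_def.1 hv)
      rw [← hu', ← hv']
      exact h1
  · exact hdec ▸ (((List.reverse_perm B).append_right C).append_left A)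
  · rw [List.head?_append, hAhead]
    rw [(List.head?_eq_getElem? : l.head? = l[0]?), List.getElem?_eq_getElem (by omega : 0 < l.length)]
    rfl
  · rw [List.getLast?_append, List.getLast?_append, hClast]
    rw [List.getElem?_eq_getElem (by omega : l.length - 1 < l.length)]
    rw [(List.getLast?_eq_getElem? : l.getLast? = l[l.length - 1]?), List.getElem?_eq_getElem (by omega : l.length - 1 < l.length)]
    rfl

theorem alternation (H' : SimpleGraph (Fin m ⊕ Fin m)) (hc : Cross H')
    (l : List (Fin m ⊕ Fin m)) (hchain : l.Chain' H'.Adj)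
    (hhead : ∀ (h : 0 < l.length), (l[0]'h).isLeft = true) :
    ∀ i (h : i < l.length), ((l[i]'h).isLeft = true ↔ i % 2 = 0) := by
  intro i
  induction i with
  | zero => intro h; simp [hhead h]
  | succ n ih =>
      intro h
      have hn : n < l.length := by omega
      have hadj : H'.Adj (l[n]'hn) (l[n+1]'h) := by
        have := List.isChain_iff_getElem.1 hchain n (by omega)
        simpa [List.get_eq_getElem] using this
      have hcc := hc _ _ hadj
      have ihn := ih hn
      rcases hu : l[n]'hn with u | u <;> rcases hv : l[n+1]'h with v | v
      · rw [hu, hv] at hcc; simp at hcc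
      · rw [hu] at ihn; simp at ihn
        simp; omega
      · rw [hu] at ihn; simp at ihn
        simp; omega
      · rw [hu, hv] at hcc; simp at hcc

open Classical in
theorem ndeg_eq_card_index (hm : 1 ≤ m) (H : SimpleGraph (Fin m ⊕ Fin m)) (w : Fin m ⊕ Fin m)
    (l : List (Fin m ⊕ Fin m)) (hn : l.Nodup) (hlen : l.length = 2 * m) :
    ndeg H w = ((Finset.univ : Finset (Fin l.length)).filter
      (fun i => H.Adj w (l.get i))).card := by
  have hinj : Function.Injective l.get := List.nodup_iff_injective_get.1 hn
  have hbij : Function.Bijective l.get := by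
    rw [Fintype.bijective_iff_injective_and_card]
    refine ⟨hinj, ?_⟩
    simp [hlen]
    omega
  refine (Finset.card_bij (fun i _ => l.get i) ?_ ?_ ?_).symm
  · intro i hi
    simp only [Finset.mem_filter, Finset.mem_univ, true_and] at hi ⊢
    exact hi
  · intro i₁ h₁ i₂ h₂ he
    exact hinj he
  · intro v hv
    simp only [ndeg, Finset.mem_filter, Finset.mem_univ, true_and] at hv
    obtain ⟨i, rfl⟩ := hbij.2 v
    exact ⟨i, by simpa [List.get_eq_getElem] using hv, rfl⟩

/-- the crossing (rotation) bound -/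
theorem crossing_bound (hm : 1 ≤ m) (H : SimpleGraph (Fin m ⊕ Fin m)) (hbip : Cross H)
    (a b x y : Fin m) (hnadj : ¬ H.Adj (Sum.inl x) (Sum.inr y))
    (hno : ¬ HamList H a b)
    (hham : HamList (H ⊔ SimpleGraph.fromEdgeSet {s(Sum.inl x, Sum.inr y)}) a b) :
    ndeg H (Sum.inl x) + ndeg H (Sum.inr y) ≤ m + 1 := by
  classical
  obtain ⟨l, hchain, hnod, hlen, hhead, hlast⟩ := hham
  set e := SimpleGraph.fromEdgeSet {s(Sum.inl x, Sum.inr y)} with he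
  have hlpos : 0 < l.length := by omega
  set v0 : Fin m ⊕ Fin m := Sum.inl ⟨0, hm⟩ with hv0
  set g : ℕ → Fin m ⊕ Fin m := fun i => l.getD i v0 with hgdef
  have hg : ∀ (i : ℕ) (h : i < l.length), g i = l[i]'h := fun i h =>
    List.getD_eq_getElem l v0 h
  have h0 : g 0 = Sum.inl a := by
    rw [List.head?_eq_getElem?, List.getElem?_eq_getElem hlpos] at hhead
    rw [hg 0 hlpos]
    exact Option.some.inj hhead
  have hcrossSup : Cross (H ⊔ e) := cross_sup H hbip x y
  have halt : ∀ i, i < l.length → ((g i).isLeft = true ↔ i % 2 = 0) := by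
    intro i h
    rw [hg i h]
    exact alternation (H ⊔ e) hcrossSup l hchain
      (fun h' => by rw [← hg 0 h', h0]; rfl) i h
  have hinj : ∀ i j, i < l.length → j < l.length → g i = g j → i = j := by
    intro i j hi hj hij
    have := List.nodup_iff_injective_get.1 hnod
      (show l.get ⟨i, hi⟩ = l.get ⟨j, hj⟩ by
        simp only [List.get_eq_getElem]
        rw [← hg i hi, ← hg j hj]; exact hij)
    exact Fin.mk.inj_iff.1 this
  have hadjall : ∀ i, i + 1 < l.length → (H ⊔ e).Adj (g i) (g (i+1)) := by
    intro i hi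
    have := List.isChain_iff_getElem.1 hchain i (by omega)
    rw [hg i (by omega), hg (i+1) hi]
    exact this
  have edge_pair : ∀ u v : Fin m ⊕ Fin m, e.Adj u v →
      (u = Sum.inl x ∧ v = Sum.inr y) ∨ (u = Sum.inr y ∧ v = Sum.inl x) := by
    intro u v huv
    rw [he, SimpleGraph.fromEdgeSet_adj] at huv
    simpa using huv.1
  have hex : ∃ k, k + 1 < l.length ∧ ¬ H.Adj (g k) (g (k+1)) := by
    by_contra hcon
    push_neg at hcon
    refine hno ⟨l, ?_, hnod, hlen, hhead, hlast⟩
    unfold List.Chain'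
    rw [List.isChain_iff_getElem]
    intro i hi
    rw [← hg i (by omega), ← hg (i+1) (by omega)]
    exact hcon i (by omega)
  obtain ⟨k, hk, hknadj⟩ := hex
  have hpair : (g k = Sum.inl x ∧ g (k+1) = Sum.inr y) ∨
      (g k = Sum.inr y ∧ g (k+1) = Sum.inl x) := by
    rcases hadjall k hk with hH | hE
    · exact absurd hH hknadj
    · exact edge_pair _ _ hE
  have huniq : ∀ i, i + 1 < l.length → i ≠ k → H.Adj (g i) (g (i+1)) := by
    intro i hi hik
    rcases hadjall i hi with hH | hE
    · exact hH
    · exfalso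
      have hE' := edge_pair _ _ hE
      rcases hpair with ⟨p1, p2⟩ | ⟨p1, p2⟩ <;> rcases hE' with ⟨q1, q2⟩ | ⟨q1, q2⟩
      · exact hik (hinj i k (by omega) (by omega) (q1.trans p1.symm))
      · have e1 : i = k + 1 := hinj i (k+1) (by omega) (by omega) (q1.trans p2.symm)
        have e2 : i + 1 = k := hinj (i+1) k (by omega) (by omega) (q2.trans p1.symm)
        omega
      · have e1 : i = k + 1 := hinj i (k+1) (by omega) (by omega) (q1.trans p2.symm)
        have e2 : i + 1 = k := hinj (i+1) k (by omega) (by omega) (q2.trans p1.symm)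
        omega
      · exact hik (hinj i k (by omega) (by omega) (q1.trans p1.symm))
  have hamrot : ∀ s t : ℕ, 1 ≤ s → s < t → t < l.length → (s - 1 = k ∨ t - 1 = k) →
      H.Adj (g (s-1)) (g (t-1)) → H.Adj (g s) (g t) → False := by
    intro s t hs hst ht hor hst1 hst2
    have hsym : Symmetric H.Adj := fun _ _ h => h.symm
    obtain ⟨l', hch', hperm', hhd', hlst'⟩ := rotate_list hsym l s t hs hst ht
      (fun i hi1 hi2 hi3 hi4 => by
        rw [← hg i (by omega), ← hg (i+1) (by omega)]
        refine huniq i (by omega) ?_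
        rcases hor with h | h <;> omega)
      (by rw [← hg (s-1) (by omega), ← hg (t-1) (by omega)]; exact hst1)
      (by rw [← hg s (by omega), ← hg t (by omega)]; exact hst2)
    exact hno ⟨l', hch', hperm'.symm.nodup hnod, hperm'.length_eq.trans hlen,
      hhd'.trans hhead, hlst'.trans hlast⟩
  have hforb : ∀ i, i + 1 < l.length →
      ¬ (H.Adj (g k) (g i) ∧ H.Adj (g (k+1)) (g (i+1))) := by
    rintro i hi ⟨h1, h2⟩
    by_cases hik : i = k
    · subst hik; exact H.loopless.irrefl _ h1
    by_cases hik1 : i + 1 = k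
    · rw [hik1] at h2; exact hknadj h2.symm
    by_cases hik2 : i = k + 1
    · rw [hik2] at h1; exact hknadj h1
    by_cases hlt : i + 1 < k
    · exact hamrot (i+1) (k+1) (by omega) (by omega) (by omega) (by omega)
        (by simpa using h1.symm) (by simpa using h2.symm)
    · have hgt : k + 1 < i := by omega
      exact hamrot (k+1) (i+1) (by omega) (by omega) (by omega) (by omega)
        (by simpa using h1) (by simpa using h2)
  -- counting
  have hside : ∀ w : Fin m ⊕ Fin m, ∀ i : Fin l.length, H.Adj w (l.get i) →
      ((l.get i).isLeft = true ↔ ¬ w.isLeft = true) := by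
    intro w i hadj
    rcases hbip w (l.get i) hadj with ⟨hw, hv⟩ | ⟨hw, hv⟩
    · rw [Sum.isRight_iff] at hv
      obtain ⟨v', hv'⟩ := hv
      rw [hv', hw]
      simp
    · rw [Sum.isRight_iff] at hw
      obtain ⟨w', hw'⟩ := hw
      rw [hw', hv]
      simp
  have hcards : ndeg H (g k) + ndeg H (g (k+1)) ≤ m + 1 := by
    set Sx : Finset ℕ := ((Finset.univ : Finset (Fin l.length)).filter
      (fun i => H.Adj (g k) (l.get i))).image (fun i : Fin l.length => i.val + 1) with hSx
    set Sy : Finset ℕ := ((Finset.univ : Finset (Fin l.length)).filter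
      (fun i => H.Adj (g (k+1)) (l.get i))).image (fun i : Fin l.length => i.val) with hSy
    have hcardx : Sx.card = ndeg H (g k) := by
      rw [hSx, Finset.card_image_of_injective _
        (fun i j hij => Fin.val_injective (Nat.succ_injective hij)),
        ← ndeg_eq_card_index hm H (g k) l hnod hlen]
    have hcardy : Sy.card = ndeg H (g (k+1)) := by
      rw [hSy, Finset.card_image_of_injective _ (fun i j hij => Fin.val_injective hij),
        ← ndeg_eq_card_index hm H (g (k+1)) l hnod hlen]
    have hdisj : Disjoint Sx Sy := by
      rw [Finset.disjoint_left]
      intro j hjx hjy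
      rw [hSx, Finset.mem_image] at hjx
      rw [hSy, Finset.mem_image] at hjy
      obtain ⟨i1, hi1, hij1⟩ := hjx
      obtain ⟨i2, hi2, hij2⟩ := hjy
      rw [Finset.mem_filter] at hi1 hi2
      have hi2v : (i2 : ℕ) = (i1 : ℕ) + 1 := by omega
      refine hforb i1 (by omega) ⟨?_, ?_⟩
      · rw [hg i1 i1.isLt]
        simpa [List.get_eq_getElem] using hi1.2
      · have := hi2.2
        simp only [List.get_eq_getElem] at this
        rw [← hg (i2 : ℕ) i2.isLt] at this
        rw [hi2v] at this
        exact this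
    have hsubU : Sx ∪ Sy ⊆ (Finset.range (2*m+1)).filter (fun j => j % 2 = k % 2) := by
      intro j hj
      rw [Finset.mem_union] at hj
      have hkside : ((g k).isLeft = true ↔ k % 2 = 0) := halt k (by omega)
      have hk1side : ((g (k+1)).isLeft = true ↔ (k+1) % 2 = 0) := halt (k+1) (by omega)
      rcases hj with hj | hj
      · rw [hSx, Finset.mem_image] at hj
        obtain ⟨i, hi, rfl⟩ := hj
        rw [Finset.mem_filter] at hi
        have hs := hside (g k) i hi.2
        have hix : ((l.get i).isLeft = true ↔ (i : ℕ) % 2 = 0) := by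
          rw [List.get_eq_getElem, ← hg (i : ℕ) i.isLt]
          exact halt (i : ℕ) i.isLt
        rw [Finset.mem_filter, Finset.mem_range]
        constructor
        · have := i.isLt; omega
        · rw [hix] at hs
          rw [hkside] at hs
          omega
      · rw [hSy, Finset.mem_image] at hj
        obtain ⟨i, hi, rfl⟩ := hj
        rw [Finset.mem_filter] at hi
        have hs := hside (g (k+1)) i hi.2
        have hix : ((l.get i).isLeft = true ↔ (i : ℕ) % 2 = 0) := by
          rw [List.get_eq_getElem, ← hg (i : ℕ) i.isLt]
          exact halt (i : ℕ) i.isLt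
        rw [Finset.mem_filter, Finset.mem_range]
        constructor
        · have := i.isLt; omega
        · rw [hix] at hs
          rw [hk1side] at hs
          omega
    have hcardU : ((Finset.range (2*m+1)).filter (fun j => j % 2 = k % 2)).card ≤ m + 1 := by
      have hsub2 : (Finset.range (2*m+1)).filter (fun j => j % 2 = k % 2) ⊆
          (Finset.range (m+1)).image (fun t => 2*t + k % 2) := by
        intro j hj
        rw [Finset.mem_filter, Finset.mem_range] at hj
        rw [Finset.mem_image]
        refine ⟨j / 2, Finset.mem_range.2 (by omega), by omega⟩
      calc ((Finset.range (2*m+1)).filter (fun j => j % 2 = k % 2)).card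
          ≤ ((Finset.range (m+1)).image (fun t => 2*t + k % 2)).card :=
            Finset.card_le_card hsub2
        _ ≤ (Finset.range (m+1)).card := Finset.card_image_le
        _ = m + 1 := Finset.card_range _
    calc ndeg H (g k) + ndeg H (g (k+1)) = Sx.card + Sy.card := by rw [hcardx, hcardy]
      _ = (Sx ∪ Sy).card := (Finset.card_union_of_disjoint hdisj).symm
      _ ≤ _ := Finset.card_le_card hsubU
      _ ≤ m + 1 := hcardU
  rcases hpair with ⟨p1, p2⟩ | ⟨p1, p2⟩
  · rw [p1, p2] at hcards; exact hcards
  · rw [p1, p2] at hcards; omega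

/-- saturation -/
theorem exists_saturated (G : SimpleGraph (Fin m ⊕ Fin m)) (hbip : Cross G) (a b : Fin m)
    (hno : ¬ HamList G a b) :
    ∃ H, G ≤ H ∧ Cross H ∧ ¬ HamList H a b ∧
      ∀ x y : Fin m, ¬ H.Adj (Sum.inl x) (Sum.inr y) →
        HamList (H ⊔ SimpleGraph.fromEdgeSet {s(Sum.inl x, Sum.inr y)}) a b := by
  classical
  suffices h : ∀ (n : ℕ) (G' : SimpleGraph (Fin m ⊕ Fin m)),
      {p : Fin m × Fin m | ¬ G'.Adj (Sum.inl p.1) (Sum.inr p.2)}.ncard ≤ n →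
      Cross G' → ¬ HamList G' a b → ∃ H, G' ≤ H ∧ Cross H ∧ ¬ HamList H a b ∧
        ∀ x y : Fin m, ¬ H.Adj (Sum.inl x) (Sum.inr y) →
          HamList (H ⊔ SimpleGraph.fromEdgeSet {s(Sum.inl x, Sum.inr y)}) a b by
    exact h _ G le_rfl hbip hno
  intro n
  induction n with
  | zero =>
      intro G' hcard hcross hnoH
      refine ⟨G', le_rfl, hcross, hnoH, ?_⟩
      intro x y hxy
      exfalso
      have hfin : {p : Fin m × Fin m | ¬ G'.Adj (Sum.inl p.1) (Sum.inr p.2)}.Finite :=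
        Set.toFinite _
      have h0 : {p : Fin m × Fin m | ¬ G'.Adj (Sum.inl p.1) (Sum.inr p.2)} = ∅ := by
        rw [← Set.ncard_eq_zero hfin]
        omega
      have : (x, y) ∈ {p : Fin m × Fin m | ¬ G'.Adj (Sum.inl p.1) (Sum.inr p.2)} := hxy
      rw [h0] at this
      exact this
  | succ n ih =>
      intro G' hcard hcross hnoH
      by_cases hsat : ∀ x y : Fin m, ¬ G'.Adj (Sum.inl x) (Sum.inr y) →
          HamList (G' ⊔ SimpleGraph.fromEdgeSet {s(Sum.inl x, Sum.inr y)}) a b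
      · exact ⟨G', le_rfl, hcross, hnoH, hsat⟩
      push_neg at hsat
      obtain ⟨x, y, hxy, hnoH'⟩ := hsat
      set G'' := G' ⊔ SimpleGraph.fromEdgeSet {s(Sum.inl x, Sum.inr y)} with hG''
      have hle : G' ≤ G'' := le_sup_left
      have hadj'' : G''.Adj (Sum.inl x) (Sum.inr y) := by
        refine Or.inr ?_
        rw [SimpleGraph.fromEdgeSet_adj]
        exact ⟨rfl, by simp⟩
      have hcard'' : {p : Fin m × Fin m | ¬ G''.Adj (Sum.inl p.1) (Sum.inr p.2)}.ncard ≤ n := by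
        have hss : {p : Fin m × Fin m | ¬ G''.Adj (Sum.inl p.1) (Sum.inr p.2)} ⊂
            {p : Fin m × Fin m | ¬ G'.Adj (Sum.inl p.1) (Sum.inr p.2)} := by
          constructor
          · intro p hp
            exact fun h => hp (hle h)
          · intro hsub
            have h1 : (x, y) ∈ {p : Fin m × Fin m | ¬ G'.Adj (Sum.inl p.1) (Sum.inr p.2)} := hxy
            have h2 := hsub h1
            exact h2 hadj''
        have := Set.ncard_lt_ncard hss (Set.toFinite _)
        omega
      obtain ⟨H, h1, h2, h3, h4⟩ := ih G'' hcard'' (cross_sup G' hcross x y) hnoH'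
      exact ⟨H, le_trans hle h1, h2, h3, h4⟩

end Stmt7

/-- Berge: a balanced bipartite graph (parts indexed by `Fin m`, degrees sorted
increasingly along each part) satisfying the stated degree condition is
Hamiltonian bi-connected. -/
theorem stmt7 (m : ℕ) (hm : 1 ≤ m) (G : SimpleGraph (Fin m ⊕ Fin m))
    [DecidableRel G.Adj]
    (hbip : ∀ a b : Fin m ⊕ Fin m, G.Adj a b →
      (a.isLeft ∧ b.isRight) ∨ (a.isRight ∧ b.isLeft))
    (hmonoU : Monotone fun i : Fin m => G.degree (Sum.inl i))
    (hmonoV : Monotone fun j : Fin m => G.degree (Sum.inr j))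
    (hcond : ∀ i j : Fin m,
      G.degree (Sum.inl i) ≤ i.val + 2 →
      (∀ i' : Fin m, i' < i → ¬ G.degree (Sum.inl i') ≤ i'.val + 2) →
      G.degree (Sum.inr j) ≤ j.val + 2 →
      (∀ j' : Fin m, j' < j → ¬ G.degree (Sum.inr j') ≤ j'.val + 2) →
      m + 2 ≤ G.degree (Sum.inl i) + G.degree (Sum.inr j)) :
    ∀ a b : Fin m, ∃ p : G.Walk (Sum.inl a) (Sum.inr b),
      p.IsPath ∧ p.length = 2 * m - 1 := by
  intro a b
  classical
  -- reduce to HamList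
  suffices h : Stmt7.HamList G a b by
    obtain ⟨l, hc, hn, hlen, hh, hl⟩ := h
    obtain ⟨p, hp, hplen⟩ := Stmt7.walk_of_list l hc hn hh hl
    exact ⟨p, hp, by rw [hplen, hlen]⟩
  by_contra hno
  obtain ⟨H, hGH, hcross, hnoH, hsat⟩ := Stmt7.exists_saturated G hbip a b hno
  -- every nonadjacent cross pair has small ndeg sum in H
  have key : ∀ x y : Fin m, ¬ H.Adj (Sum.inl x) (Sum.inr y) →
      Stmt7.ndeg H (Sum.inl x) + Stmt7.ndeg H (Sum.inr y) ≤ m + 1 := by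
    intro x y hxy
    exact Stmt7.crossing_bound hm H hcross a b x y hxy hnoH (hsat x y hxy)
  -- if no nonadjacent pair: complete, contradiction
  by_cases hcomp : ∀ x y : Fin m, H.Adj (Sum.inl x) (Sum.inr y)
  · exact hnoH (Stmt7.hamList_complete H hm hcomp a b)
  push_neg at hcomp
  obtain ⟨x0, y0, hx0y0⟩ := hcomp
  set S := Finset.univ.filter
    (fun p : Fin m × Fin m => ¬ H.Adj (Sum.inl p.1) (Sum.inr p.2)) with hS
  have hSne : S.Nonempty := ⟨(x0, y0), by simp [hS, hx0y0]⟩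
  obtain ⟨p, hpS, hpmax⟩ := Finset.exists_max_image S
    (fun p => Stmt7.ndeg H (Sum.inl p.1) + Stmt7.ndeg H (Sum.inr p.2)) hSne
  obtain ⟨x, y⟩ := p
  have hxy : ¬ H.Adj (Sum.inl x) (Sum.inr y) := by simpa [hS] using hpS
  set s := Stmt7.ndeg H (Sum.inl x) with hsdef
  set t := Stmt7.ndeg H (Sum.inr y) with htdef
  have hst : s + t ≤ m + 1 := key x y hxy
  have hGH' : ∀ v, G.degree v ≤ Stmt7.ndeg H v := fun v => by
    rw [← Stmt7.ndeg_eq_degree]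
    exact Stmt7.ndeg_mono hGH v
  -- right side
  have hDr : t - 1 ≤ (Finset.univ.filter fun j : Fin m => G.degree (Sum.inr j) ≤ t).card := by
    have hsub : (Finset.univ.filter fun v : Fin m => ¬ H.Adj (Sum.inl x) (Sum.inr v)) ⊆
        (Finset.univ.filter fun j : Fin m => G.degree (Sum.inr j) ≤ t) := by
      intro v hv
      simp only [Finset.mem_filter, Finset.mem_univ, true_and] at hv ⊢
      have hmem : (x, v) ∈ S := by simp [hS, hv]
      have := hpmax (x, v) hmem
      have h2 : Stmt7.ndeg H (Sum.inr v) ≤ t := by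
        simp only at this
        omega
      exact le_trans (hGH' (Sum.inr v)) h2
    have hcardnn : (Finset.univ.filter
        fun v : Fin m => ¬ H.Adj (Sum.inl x) (Sum.inr v)).card = m - s := by
      rw [Finset.filter_not, Finset.card_sdiff_of_subset (Finset.filter_subset _ _)]
      rw [← Stmt7.ndeg_left H hcross x, Finset.card_univ, Fintype.card_fin]
    have := Finset.card_le_card hsub
    omega
  -- left side
  have hDl : s - 1 ≤ (Finset.univ.filter fun i : Fin m => G.degree (Sum.inl i) ≤ s).card := by
    have hsub : (Finset.univ.filter fun u : Fin m => ¬ H.Adj (Sum.inr y) (Sum.inl u)) ⊆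
        (Finset.univ.filter fun i : Fin m => G.degree (Sum.inl i) ≤ s) := by
      intro u hu
      simp only [Finset.mem_filter, Finset.mem_univ, true_and] at hu ⊢
      have hmem : (u, y) ∈ S := by
        simp only [hS, Finset.mem_filter, Finset.mem_univ, true_and]
        exact fun h => hu h.symm
      have := hpmax (u, y) hmem
      have h2 : Stmt7.ndeg H (Sum.inl u) ≤ s := by
        simp only at this
        omega
      exact le_trans (hGH' (Sum.inl u)) h2
    have hcardnn : (Finset.univ.filter
        fun u : Fin m => ¬ H.Adj (Sum.inr y) (Sum.inl u)).card = m - t := by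
      rw [Finset.filter_not, Finset.card_sdiff_of_subset (Finset.filter_subset _ _)]
      rw [← Stmt7.ndeg_right H hcross y, Finset.card_univ, Fintype.card_fin]
    have := Finset.card_le_card hsub
    omega
  obtain ⟨cr, hcr1, hcr2⟩ := Stmt7.find_c (fun j => G.degree (Sum.inr j)) hmonoV hm t
    (by omega) y (le_trans (hGH' (Sum.inr y)) (le_of_eq htdef.symm)) hDr
  obtain ⟨cl, hcl1, hcl2⟩ := Stmt7.find_c (fun i => G.degree (Sum.inl i)) hmonoU hm s
    (by omega) x (le_trans (hGH' (Sum.inl x)) (le_of_eq hsdef.symm)) hDl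
  obtain ⟨j₀, hj1, hj2, hj3⟩ := Stmt7.find_min (fun j => G.degree (Sum.inr j)) hmonoV t cr hcr1 hcr2
  obtain ⟨i₀, hi1, hi2, hi3⟩ := Stmt7.find_min (fun i => G.degree (Sum.inl i)) hmonoU s cl hcl1 hcl2
  have := hcond i₀ j₀ hi1 hi2 hj1 hj2
  omega
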